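/- Let (ξ_j^{(N)*})_{j=1}^N be the unique maximizer of T_N. Then for all j < N, ξ_j^{(N)*} < (B - ∑_{i=1}^j ξ_i^{(N)*})/w, and for j = N equality holds: ξ_N^{(N)*} = (B - ∑_{i=1}^N ξ_i^{(N)*})/w. -/

import Mathlib

open Real Filter Topology

lemma exists_gt_of_hasDerivAt_pos (φ : ℝ → ℝ) (d : ℝ) (h : HasDerivAt φ d 0)
    (hd : 0 < d) (δ : ℝ) (hδ : 0 < δ) : ∃ t, 0 < t ∧ t ≤ δ ∧ φ 0 < φ t := by
  have hs := hasDerivAt_iff_tendsto_slope.mp h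
  have h1 : ∀ᶠ t in 𝓝[≠] (0:ℝ), 0 < slope φ 0 t := hs (Ioi_mem_nhds hd)
  have h2 : ∀ᶠ t in 𝓝[>] (0:ℝ), 0 < slope φ 0 t :=
    h1.filter_mono (nhdsWithin_mono 0 (fun x hx => ne_of_gt hx))
  have h3 : ∀ᶠ t in 𝓝[>] (0:ℝ), t ∈ Set.Ioc 0 δ := Ioc_mem_nhdsGT_of_mem ⟨le_refl 0, hδ⟩
  obtain ⟨t, ht1, ht2⟩ := (h2.and h3).exists
  refine ⟨t, ht2.1, ht2.2, ?_⟩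
  have hsl : slope φ 0 t = (φ t - φ 0) / t := by
    rw [slope_def_field, sub_zero]
  rw [hsl] at ht1
  have := mul_pos ht1 ht2.1
  rw [div_mul_cancel₀ _ (ne_of_gt ht2.1)] at this
  linarith


lemma log_concave_comb (u v m : ℝ) (hu : 0 < u) (hv : 0 < v) (huv : u ≠ v) (hm : 1 ≤ m) :
    Real.log u + m * Real.log v < (1+m) * Real.log ((u + m*v)/(1+m)) := by
  have hm0 : 0 < m := lt_of_lt_of_le one_pos hm
  have h1m : 0 < 1 + m := by linarith
  have ha : (0:ℝ) < 1/(1+m) := by positivity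
  have hb : (0:ℝ) < m/(1+m) := by positivity
  have hab : 1/(1+m) + m/(1+m) = 1 := by field_simp
  have key := strictConcaveOn_log_Ioi.2 (Set.mem_Ioi.mpr hu) (Set.mem_Ioi.mpr hv) huv ha hb hab
  simp only [smul_eq_mul] at key
  have heq : (1/(1+m)) * u + (m/(1+m)) * v = (u + m*v)/(1+m) := by ring
  rw [heq] at key
  have := mul_lt_mul_of_pos_left key h1m
  calc Real.log u + m * Real.log v
      = (1+m) * (1/(1+m) * Real.log u + m/(1+m) * Real.log v) := by field_simp
    _ < (1+m) * Real.log ((u + m*v)/(1+m)) := this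


lemma hasDerivAt_logb_affine (u v : ℝ) (hu : 0 < u) :
    HasDerivAt (fun t : ℝ => Real.logb 2 (u + v * t)) (v / (u * Real.log 2)) 0 := by
  have h1 : HasDerivAt (fun t : ℝ => u + v * t) v 0 := by
    simpa using ((hasDerivAt_id (0:ℝ)).const_mul v).const_add u
  have h2 := h1.log (by simpa using ne_of_gt hu)
  have h3 := h2.div_const (Real.log 2)
  simp only [Real.logb]
  rw [show v / (u * Real.log 2) = v / (u + v * 0) / Real.log 2 by rw [mul_zero, add_zero, div_div]]
  exact h3

/-- The finite-horizon throughput functional `T_N` (log base 2), evaluated at a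
sequence indexed from 1 (only coordinates `1,…,N` matter). -/
noncomputable def TN (B γ p : ℝ) (w N : ℕ) (ξ : ℕ → ℝ) : ℝ :=
  (∑ k ∈ Finset.Icc 1 w, p ^ 2 * (1 - p) ^ (k - 1) * ((k : ℝ) / 2) *
      Real.logb 2 (1 + γ * B / k))
  + (∑ j ∈ Finset.Icc 1 N, p * (1 - p) ^ (j + w - 1) * (1 / 2) *
      Real.logb 2 (1 + γ * ξ j))
  + (∑ k ∈ Finset.Icc 1 N, p ^ 2 * (1 - p) ^ (k + w - 1) * ((w : ℝ) / 2) *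
      Real.logb 2 (1 + (γ / w) * (B - ∑ j ∈ Finset.Icc 1 k, ξ j)))
  + p * (1 - p) ^ (w + N) * ((w : ℝ) / 2) *
      Real.logb 2 (1 + (γ / w) * (B - ∑ j ∈ Finset.Icc 1 N, ξ j))

/-- The admissible simplex `{ξ : ξ_j ≥ 0, ∑_{j=1}^N ξ_j ≤ B}`, as sequences supported
on coordinates `1,…,N`. -/
def adm (B : ℝ) (N : ℕ) : Set (ℕ → ℝ) :=
  {ξ | (∀ j, 1 ≤ j → j ≤ N → 0 ≤ ξ j) ∧ (∀ j, j = 0 ∨ N < j → ξ j = 0)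
      ∧ ∑ j ∈ Finset.Icc 1 N, ξ j ≤ B}

lemma TN_update_N (B γ p : ℝ) (w N : ℕ) (hN : 1 ≤ N) (ξ : ℕ → ℝ) (x : ℝ) :
    TN B γ p w N (Function.update ξ N x) =
      TN B γ p w N ξ
      + p * (1-p)^(N+w-1) * (1/2) *
          (logb 2 (1 + γ * x) - logb 2 (1 + γ * ξ N))
      + (p^2*(1-p)^(N+w-1)*((w:ℝ)/2) + p*(1-p)^(w+N)*((w:ℝ)/2)) *
          (logb 2 (1 + (γ/w)*(B - ((∑ i ∈ Finset.Icc 1 N, ξ i) - ξ N + x)))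
           - logb 2 (1 + (γ/w)*(B - ∑ i ∈ Finset.Icc 1 N, ξ i))) := by
  classical
  set η := Function.update ξ N x with hηdef
  have hNmem : N ∈ Finset.Icc 1 N := Finset.mem_Icc.mpr ⟨hN, le_refl N⟩
  have hηe : ∀ i, i ≠ N → η i = ξ i := fun i hi => Function.update_of_ne hi x ξ
  have hηN : η N = x := Function.update_self N x ξ
  have hS : ∀ k, k < N → ∑ i ∈ Finset.Icc 1 k, η i = ∑ i ∈ Finset.Icc 1 k, ξ i := by
    intro k hk
    apply Finset.sum_congr rfl
    intro i hi
    exact hηe i (by have := (Finset.mem_Icc.mp hi).2; omega)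
  have hSN : ∑ i ∈ Finset.Icc 1 N, η i = (∑ i ∈ Finset.Icc 1 N, ξ i) - ξ N + x := by
    have h1 : ∑ i ∈ Finset.Icc 1 N, (η i - ξ i) = η N - ξ N :=
      Finset.sum_eq_single_of_mem N hNmem (fun i _ hne => by rw [hηe i hne]; ring)
    rw [Finset.sum_sub_distrib, hηN] at h1
    linarith
  have hC2 : ∑ j ∈ Finset.Icc 1 N, p*(1-p)^(j+w-1)*(1/2)*logb 2 (1+γ*η j)
      = (∑ j ∈ Finset.Icc 1 N, p*(1-p)^(j+w-1)*(1/2)*logb 2 (1+γ*ξ j))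
        + p*(1-p)^(N+w-1)*(1/2)*(logb 2 (1+γ*x) - logb 2 (1+γ*ξ N)) := by
    have h1 : ∑ j ∈ Finset.Icc 1 N, (p*(1-p)^(j+w-1)*(1/2)*logb 2 (1+γ*η j)
        - p*(1-p)^(j+w-1)*(1/2)*logb 2 (1+γ*ξ j))
        = p*(1-p)^(N+w-1)*(1/2)*logb 2 (1+γ*η N)
          - p*(1-p)^(N+w-1)*(1/2)*logb 2 (1+γ*ξ N) :=
      Finset.sum_eq_single_of_mem N hNmem (fun i _ hne => by rw [hηe i hne]; ring)
    rw [Finset.sum_sub_distrib, hηN] at h1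
    linarith
  have hC3 : ∑ k ∈ Finset.Icc 1 N, p^2*(1-p)^(k+w-1)*((w:ℝ)/2)
        *logb 2 (1+(γ/w)*(B - ∑ j ∈ Finset.Icc 1 k, η j))
      = (∑ k ∈ Finset.Icc 1 N, p^2*(1-p)^(k+w-1)*((w:ℝ)/2)
          *logb 2 (1+(γ/w)*(B - ∑ j ∈ Finset.Icc 1 k, ξ j)))
        + p^2*(1-p)^(N+w-1)*((w:ℝ)/2)
          *(logb 2 (1+(γ/w)*(B - ((∑ i ∈ Finset.Icc 1 N, ξ i) - ξ N + x)))
            - logb 2 (1+(γ/w)*(B - ∑ i ∈ Finset.Icc 1 N, ξ i))) := by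
    have h1 : ∑ k ∈ Finset.Icc 1 N, (p^2*(1-p)^(k+w-1)*((w:ℝ)/2)
        *logb 2 (1+(γ/w)*(B - ∑ j ∈ Finset.Icc 1 k, η j))
        - p^2*(1-p)^(k+w-1)*((w:ℝ)/2)
        *logb 2 (1+(γ/w)*(B - ∑ j ∈ Finset.Icc 1 k, ξ j)))
        = p^2*(1-p)^(N+w-1)*((w:ℝ)/2)
            *logb 2 (1+(γ/w)*(B - ∑ j ∈ Finset.Icc 1 N, η j))
          - p^2*(1-p)^(N+w-1)*((w:ℝ)/2)
            *logb 2 (1+(γ/w)*(B - ∑ j ∈ Finset.Icc 1 N, ξ j)) := by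
      refine Finset.sum_eq_single_of_mem N hNmem (fun i hi hne => ?_)
      rw [hS i (by have := (Finset.mem_Icc.mp hi).2; omega)]; ring
    rw [Finset.sum_sub_distrib, hSN] at h1
    linarith
  show TN B γ p w N η = _
  unfold TN
  rw [hC2, hC3, hSN]
  ring


lemma TN_swap (B γ p : ℝ) (w N j : ℕ) (hj1 : 1 ≤ j) (hjN : j < N) (ξ : ℕ → ℝ) (t : ℝ) :
    TN B γ p w N (Function.update (Function.update ξ j (ξ j - t)) (j+1) (ξ (j+1) + t)) =
      TN B γ p w N ξ
      + p * (1-p)^(j+w-1) * (1/2) *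
          (logb 2 (1 + γ * (ξ j - t)) - logb 2 (1 + γ * ξ j))
      + p * (1-p)^(j+w) * (1/2) *
          (logb 2 (1 + γ * (ξ (j+1) + t)) - logb 2 (1 + γ * ξ (j+1)))
      + p^2 * (1-p)^(j+w-1) * ((w:ℝ)/2) *
          (logb 2 (1 + (γ/w)*(B - ((∑ i ∈ Finset.Icc 1 j, ξ i) - t)))
           - logb 2 (1 + (γ/w)*(B - ∑ i ∈ Finset.Icc 1 j, ξ i))) := by
  classical
  set η := Function.update (Function.update ξ j (ξ j - t)) (j+1) (ξ (j+1) + t) with hηdef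
  have hjne : j ≠ j + 1 := by omega
  have hηe : ∀ i, i ≠ j → i ≠ j+1 → η i = ξ i := by
    intro i h1 h2
    rw [hηdef, Function.update_of_ne h2, Function.update_of_ne h1]
  have hηj : η j = ξ j - t := by
    rw [hηdef, Function.update_of_ne hjne, Function.update_self]
  have hηj1 : η (j+1) = ξ (j+1) + t := Function.update_self _ _ _
  have hjmem : j ∈ Finset.Icc 1 N := Finset.mem_Icc.mpr ⟨hj1, by omega⟩
  have hj1mem : j+1 ∈ Finset.Icc 1 N := Finset.mem_Icc.mpr ⟨by omega, by omega⟩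
  -- partial sums
  have hS : ∀ k, ∑ i ∈ Finset.Icc 1 k, η i
      = (∑ i ∈ Finset.Icc 1 k, ξ i) - (if k = j then t else 0) := by
    intro k
    have hsub : ∑ i ∈ Finset.Icc 1 k, (η i - ξ i)
        = (∑ i ∈ Finset.Icc 1 k, η i) - ∑ i ∈ Finset.Icc 1 k, ξ i :=
      Finset.sum_sub_distrib _ _
    rcases lt_trichotomy k j with hk | hk | hk
    · have : ∑ i ∈ Finset.Icc 1 k, (η i - ξ i) = 0 := by
        apply Finset.sum_eq_zero
        intro i hi
        have := (Finset.mem_Icc.mp hi).2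
        rw [hηe i (by omega) (by omega)]; ring
      rw [this] at hsub
      simp [if_neg (by omega : ¬ k = j)]
      linarith
    · subst hk
      have : ∑ i ∈ Finset.Icc 1 k, (η i - ξ i) = η k - ξ k :=
        Finset.sum_eq_single_of_mem k (Finset.mem_Icc.mpr ⟨hj1, le_refl k⟩)
          (fun i hi hne => by
            have := (Finset.mem_Icc.mp hi).2
            rw [hηe i hne (by omega)]; ring)
      rw [this, hηj] at hsub
      rw [if_pos rfl]
      linarith
    · have hpair : ({j, j+1} : Finset ℕ) ⊆ Finset.Icc 1 k := by
        intro i hi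
        simp only [Finset.mem_insert, Finset.mem_singleton] at hi
        rcases hi with h | h <;> subst h <;> exact Finset.mem_Icc.mpr ⟨by omega, by omega⟩
      have : ∑ i ∈ Finset.Icc 1 k, (η i - ξ i) = ∑ i ∈ ({j, j+1} : Finset ℕ), (η i - ξ i) := by
        refine (Finset.sum_subset hpair ?_).symm
        intro i _ hni
        simp only [Finset.mem_insert, Finset.mem_singleton, not_or] at hni
        rw [hηe i hni.1 hni.2]; ring
      rw [Finset.sum_pair hjne, hηj, hηj1] at this
      rw [this] at hsub
      simp [if_neg (by omega : ¬ k = j)]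
      linarith
  have hC2 : ∑ i ∈ Finset.Icc 1 N, p*(1-p)^(i+w-1)*(1/2)*logb 2 (1+γ*η i)
      = (∑ i ∈ Finset.Icc 1 N, p*(1-p)^(i+w-1)*(1/2)*logb 2 (1+γ*ξ i))
        + p*(1-p)^(j+w-1)*(1/2)*(logb 2 (1+γ*(ξ j - t)) - logb 2 (1+γ*ξ j))
        + p*(1-p)^(j+w)*(1/2)*(logb 2 (1+γ*(ξ (j+1) + t)) - logb 2 (1+γ*ξ (j+1))) := by
    have hpair : ({j, j+1} : Finset ℕ) ⊆ Finset.Icc 1 N := by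
      intro i hi
      simp only [Finset.mem_insert, Finset.mem_singleton] at hi
      rcases hi with h | h <;> subst h <;> assumption
    have h1 : ∑ i ∈ Finset.Icc 1 N, (p*(1-p)^(i+w-1)*(1/2)*logb 2 (1+γ*η i)
        - p*(1-p)^(i+w-1)*(1/2)*logb 2 (1+γ*ξ i))
        = ∑ i ∈ ({j, j+1} : Finset ℕ), (p*(1-p)^(i+w-1)*(1/2)*logb 2 (1+γ*η i)
        - p*(1-p)^(i+w-1)*(1/2)*logb 2 (1+γ*ξ i)) := by
      refine (Finset.sum_subset hpair ?_).symm
      intro i _ hni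
      simp only [Finset.mem_insert, Finset.mem_singleton, not_or] at hni
      rw [hηe i hni.1 hni.2]; ring
    rw [Finset.sum_pair hjne, hηj, hηj1, Finset.sum_sub_distrib] at h1
    have hexp : j + 1 + w - 1 = j + w := by omega
    rw [hexp] at h1
    linarith
  have hC3 : ∑ k ∈ Finset.Icc 1 N, p^2*(1-p)^(k+w-1)*((w:ℝ)/2)
        *logb 2 (1+(γ/w)*(B - ∑ i ∈ Finset.Icc 1 k, η i))
      = (∑ k ∈ Finset.Icc 1 N, p^2*(1-p)^(k+w-1)*((w:ℝ)/2)
          *logb 2 (1+(γ/w)*(B - ∑ i ∈ Finset.Icc 1 k, ξ i)))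
        + p^2*(1-p)^(j+w-1)*((w:ℝ)/2)
          *(logb 2 (1+(γ/w)*(B - ((∑ i ∈ Finset.Icc 1 j, ξ i) - t)))
            - logb 2 (1+(γ/w)*(B - ∑ i ∈ Finset.Icc 1 j, ξ i))) := by
    have h1 : ∑ k ∈ Finset.Icc 1 N, (p^2*(1-p)^(k+w-1)*((w:ℝ)/2)
        *logb 2 (1+(γ/w)*(B - ∑ i ∈ Finset.Icc 1 k, η i))
        - p^2*(1-p)^(k+w-1)*((w:ℝ)/2)
        *logb 2 (1+(γ/w)*(B - ∑ i ∈ Finset.Icc 1 k, ξ i)))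
        = p^2*(1-p)^(j+w-1)*((w:ℝ)/2)
            *logb 2 (1+(γ/w)*(B - ∑ i ∈ Finset.Icc 1 j, η i))
          - p^2*(1-p)^(j+w-1)*((w:ℝ)/2)
            *logb 2 (1+(γ/w)*(B - ∑ i ∈ Finset.Icc 1 j, ξ i)) := by
      refine Finset.sum_eq_single_of_mem j hjmem (fun k _ hne => ?_)
      rw [hS k, if_neg hne]; ring_nf
    rw [Finset.sum_sub_distrib, hS j, if_pos rfl] at h1
    linarith
  show TN B γ p w N η = _
  unfold TN
  rw [hC2, hC3, hS N, if_neg (by omega : ¬ N = j), sub_zero]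
  ring


lemma sum_swap (N j : ℕ) (hj1 : 1 ≤ j) (hjN : j < N) (ξ : ℕ → ℝ) (t : ℝ) :
    ∑ i ∈ Finset.Icc 1 N,
        (Function.update (Function.update ξ j (ξ j - t)) (j+1) (ξ (j+1) + t)) i
      = ∑ i ∈ Finset.Icc 1 N, ξ i := by
  classical
  set η := Function.update (Function.update ξ j (ξ j - t)) (j+1) (ξ (j+1) + t) with hηdef
  have hjne : j ≠ j + 1 := by omega
  have hηe : ∀ i, i ≠ j → i ≠ j+1 → η i = ξ i := by
    intro i h1 h2
    rw [hηdef, Function.update_of_ne h2, Function.update_of_ne h1]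
  have hηj : η j = ξ j - t := by
    rw [hηdef, Function.update_of_ne hjne, Function.update_self]
  have hηj1 : η (j+1) = ξ (j+1) + t := Function.update_self _ _ _
  have hpair : ({j, j+1} : Finset ℕ) ⊆ Finset.Icc 1 N := by
    intro i hi
    simp only [Finset.mem_insert, Finset.mem_singleton] at hi
    rcases hi with h | h <;> subst h <;> exact Finset.mem_Icc.mpr ⟨by omega, by omega⟩
  have h1 : ∑ i ∈ Finset.Icc 1 N, (η i - ξ i) = ∑ i ∈ ({j, j+1} : Finset ℕ), (η i - ξ i) := by
    refine (Finset.sum_subset hpair ?_).symm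
    intro i _ hni
    simp only [Finset.mem_insert, Finset.mem_singleton, not_or] at hni
    rw [hηe i hni.1 hni.2]; ring
  rw [Finset.sum_pair hjne, hηj, hηj1, Finset.sum_sub_distrib] at h1
  linarith


lemma swap_improve (B γ p : ℝ) (w N j : ℕ) (hγ : 0 < γ) (hw : 1 ≤ w)
    (hp : 0 < p) (hp1 : p < 1) (hj1 : 1 ≤ j) (hjN : j < N) (ξ : ℕ → ℝ) (hξ : ξ ∈ adm B N)
    (hxj : 0 < ξ j)
    (hkey : 1/(1 + γ * ξ j) <
      (1-p)/(1 + γ * ξ (j+1)) + p/(1 + (γ/(w:ℝ)) * (B - ∑ i ∈ Finset.Icc 1 j, ξ i))) :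
    ∃ η ∈ adm B N, TN B γ p w N ξ < TN B γ p w N η := by
  obtain ⟨hnn, hz, hsum⟩ := hξ
  have hw0 : (0:ℝ) < w := by exact_mod_cast hw
  have hlog2 : (0:ℝ) < Real.log 2 := Real.log_pos one_lt_two
  set S : ℝ := ∑ i ∈ Finset.Icc 1 j, ξ i with hSdef
  have hSB : S ≤ B := by
    refine le_trans ?_ hsum
    refine Finset.sum_le_sum_of_subset_of_nonneg (Finset.Icc_subset_Icc le_rfl (by omega)) ?_
    intro i hi _
    exact hnn i (Finset.mem_Icc.mp hi).1 (Finset.mem_Icc.mp hi).2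
  set A : ℝ := 1 + γ * ξ j with hAdef
  set Bq : ℝ := 1 + γ * ξ (j+1) with hBqdef
  set C : ℝ := 1 + (γ/(w:ℝ)) * (B - S) with hCdef
  have hA : 0 < A := by
    have := hnn j hj1 (by omega); nlinarith
  have hBq : 0 < Bq := by
    have := hnn (j+1) (by omega) (by omega); nlinarith
  have hC : 0 < C := by
    rw [hCdef]
    nlinarith [div_pos hγ hw0, hSB]
  -- the gain function
  set ψ : ℝ → ℝ := fun t =>
    p * (1-p)^(j+w-1) * (1/2) * (logb 2 (A + (-γ) * t) - logb 2 (1 + γ * ξ j))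
    + p * (1-p)^(j+w) * (1/2) * (logb 2 (Bq + γ * t) - logb 2 (1 + γ * ξ (j+1)))
    + p^2 * (1-p)^(j+w-1) * ((w:ℝ)/2) *
        (logb 2 (C + (γ/(w:ℝ)) * t) - logb 2 (1 + (γ/(w:ℝ))*(B - S))) with hψdef
  have hTNψ : ∀ t : ℝ,
      TN B γ p w N (Function.update (Function.update ξ j (ξ j - t)) (j+1) (ξ (j+1) + t))
        = TN B γ p w N ξ + ψ t := by
    intro t
    rw [TN_swap B γ p w N j hj1 hjN ξ t]
    have e1 : 1 + γ * (ξ j - t) = A + (-γ) * t := by rw [hAdef]; ring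
    have e2 : 1 + γ * (ξ (j+1) + t) = Bq + γ * t := by rw [hBqdef]; ring
    have e3 : 1 + (γ/(w:ℝ)) * (B - (S - t)) = C + (γ/(w:ℝ)) * t := by rw [hCdef]; ring
    rw [e1, e2, e3, hψdef]
    ring
  -- derivative of ψ at 0
  set D : ℝ := p * (1-p)^(j+w-1) * (1/2) * ((-γ) / (A * Real.log 2))
    + p * (1-p)^(j+w) * (1/2) * (γ / (Bq * Real.log 2))
    + p^2 * (1-p)^(j+w-1) * ((w:ℝ)/2) * ((γ/(w:ℝ)) / (C * Real.log 2)) with hDdef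
  have hder : HasDerivAt ψ D 0 := by
    have d1 := (hasDerivAt_logb_affine A (-γ) hA).sub_const (logb 2 (1 + γ * ξ j))
    have d2 := (hasDerivAt_logb_affine Bq γ hBq).sub_const (logb 2 (1 + γ * ξ (j+1)))
    have d3 := (hasDerivAt_logb_affine C (γ/(w:ℝ)) hC).sub_const
      (logb 2 (1 + (γ/(w:ℝ))*(B - S)))
    exact ((d1.const_mul (p * (1-p)^(j+w-1) * (1/2))).add
      (d2.const_mul (p * (1-p)^(j+w) * (1/2)))).add
      (d3.const_mul (p^2 * (1-p)^(j+w-1) * ((w:ℝ)/2)))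
  have hpow : (1-p)^(j+w) = (1-p)^(j+w-1) * (1-p) := by
    rw [← pow_succ]; congr 1; omega
  have hppos : 0 < (1-p)^(j+w-1) := pow_pos (by linarith) _
  have hDpos : 0 < D := by
    have hKpos : 0 < p * (1-p)^(j+w-1) * γ / (2 * Real.log 2) := by positivity
    have hfact : D = (p * (1-p)^(j+w-1) * γ / (2 * Real.log 2)) *
        ((1-p)/Bq + p/C - 1/A) := by
      rw [hDdef, hpow]
      field_simp
      ring
    rw [hfact]
    apply mul_pos hKpos
    linarith
  obtain ⟨t, ht0, htle, hψt⟩ := exists_gt_of_hasDerivAt_pos ψ D hder hDpos (ξ j) hxj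
  have hψ0 : ψ 0 = 0 := by
    rw [hψdef]
    simp only [mul_zero, add_zero]
    rw [hAdef, hBqdef, hCdef]
    ring
  set η := Function.update (Function.update ξ j (ξ j - t)) (j+1) (ξ (j+1) + t) with hηdef
  have hηe : ∀ i, i ≠ j → i ≠ j+1 → η i = ξ i := by
    intro i h1 h2
    rw [hηdef, Function.update_of_ne h2, Function.update_of_ne h1]
  have hηj : η j = ξ j - t := by
    rw [hηdef, Function.update_of_ne (by omega : j ≠ j+1), Function.update_self]
  have hηj1 : η (j+1) = ξ (j+1) + t := Function.update_self _ _ _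
  refine ⟨η, ⟨?_, ?_, ?_⟩, ?_⟩
  · intro i hi1 hiN
    rcases eq_or_ne i j with rfl | h1
    · rw [hηj]; linarith
    rcases eq_or_ne i (j+1) with rfl | h2
    · rw [hηj1]; have := hnn (j+1) (by omega) (by omega); linarith
    · rw [hηe i h1 h2]; exact hnn i hi1 hiN
  · intro i hi
    have h1 : i ≠ j := by omega
    have h2 : i ≠ j + 1 := by omega
    rw [hηe i h1 h2]; exact hz i hi
  · rw [hηdef, sum_swap N j hj1 hjN ξ t]; exact hsum
  · rw [hηdef, hTNψ t]
    have : ψ t > 0 := by rw [← hψ0]; exact hψt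
    linarith


lemma last_coord (B γ p : ℝ) (w N : ℕ) (hγ : 0 < γ)
    (hw : 1 ≤ w) (hp : 0 < p) (hp1 : p < 1) (hN : 1 ≤ N) (ξ : ℕ → ℝ)
    (hξ : ξ ∈ adm B N) (hmax : ∀ η ∈ adm B N, TN B γ p w N η ≤ TN B γ p w N ξ) :
    ξ N = (B - ∑ i ∈ Finset.Icc 1 N, ξ i) / w := by
  obtain ⟨hnn, hz, hsum⟩ := hξ
  have hw0 : (0:ℝ) < w := by exact_mod_cast hw
  have hw1 : (1:ℝ) ≤ w := by exact_mod_cast hw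
  have hlog2 : (0:ℝ) < Real.log 2 := Real.log_pos one_lt_two
  set S : ℝ := ∑ i ∈ Finset.Icc 1 N, ξ i with hSdef
  have hξN : 0 ≤ ξ N := hnn N hN le_rfl
  set R : ℝ := B - (S - ξ N) with hRdef
  have hR0 : 0 ≤ R := by rw [hRdef]; linarith
  have hRx : ξ N ≤ R := by rw [hRdef]; linarith
  set x : ℝ := R / ((w:ℝ) + 1) with hxdef
  have hx0 : 0 ≤ x := by positivity
  have hxR : x ≤ R := by
    rw [hxdef, div_le_iff₀ (by linarith)]; nlinarith
  -- main claim : ξ N = x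
  have hmain : ξ N = x := by
    by_contra hne
    -- the improved point
    set η := Function.update ξ N x with hηdef
    have hηadm : η ∈ adm B N := by
      refine ⟨?_, ?_, ?_⟩
      · intro i h1 h2
        rcases eq_or_ne i N with rfl | h
        · rw [hηdef, Function.update_self]; exact hx0
        · rw [hηdef, Function.update_of_ne h]; exact hnn i h1 h2
      · intro i hi
        have h : i ≠ N := by omega
        rw [hηdef, Function.update_of_ne h]; exact hz i hi
      · have hSη : ∑ i ∈ Finset.Icc 1 N, η i = S - ξ N + x := by
          have h1 : ∑ i ∈ Finset.Icc 1 N, (η i - ξ i) = η N - ξ N :=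
            Finset.sum_eq_single_of_mem N (Finset.mem_Icc.mpr ⟨hN, le_rfl⟩)
              (fun i _ hne2 => by rw [hηdef, Function.update_of_ne hne2]; ring)
          rw [Finset.sum_sub_distrib, hηdef, Function.update_self] at h1
          rw [← hSdef] at h1
          linarith
        rw [hSη]
        have : S - ξ N + x = B - R + x := by rw [hRdef]; ring
        rw [this]; linarith
    -- strict improvement
    have himp : TN B γ p w N ξ < TN B γ p w N η := by
      rw [hηdef, TN_update_N B γ p w N hN ξ x]
      have hcoef : p^2*(1-p)^(N+w-1)*((w:ℝ)/2) + p*(1-p)^(w+N)*((w:ℝ)/2)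
          = p * (1-p)^(N+w-1) * (1/2) * w := by
        have hpow : (1-p)^(w+N) = (1-p)^(N+w-1) * (1-p) := by
          rw [← pow_succ]; congr 1; omega
        rw [hpow]; ring
      have harg1 : B - (S - ξ N + x) = R - x := by rw [hRdef]; ring
      have harg2 : B - S = R - ξ N := by rw [hRdef]; ring
      rw [hcoef, harg1, harg2]
      -- now reduce to the concavity inequality
      set u : ℝ := 1 + γ * ξ N with hudef
      set v : ℝ := 1 + (γ/(w:ℝ)) * (R - ξ N) with hvdef
      have hu : 0 < u := by rw [hudef]; nlinarith
      have hv : 0 < v := by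
        rw [hvdef]
        nlinarith [div_pos hγ hw0]
      have huv : u ≠ v := by
        rw [hudef, hvdef]
        intro hcon
        apply hne
        have hγne : γ ≠ 0 := ne_of_gt hγ
        have h2 : γ * ξ N = γ/(w:ℝ) * (R - ξ N) := by linarith
        have h3 : γ * (ξ N * (w:ℝ)) = γ * (R - ξ N) := by
          field_simp at h2
          rw [h2]
        have h4 : ξ N * (w:ℝ) = R - ξ N := mul_left_cancel₀ hγne h3
        rw [hxdef, eq_div_iff (by linarith : ((w:ℝ)+1) ≠ 0)]
        linarith
      have hkey := log_concave_comb u v (w:ℝ) hu hv huv hw1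
      have hcomb : (u + (w:ℝ)*v)/(1+(w:ℝ)) = 1 + γ * x := by
        rw [hudef, hvdef, hxdef]
        field_simp
        ring
      rw [hcomb] at hkey
      have hargx : 1 + (γ/(w:ℝ)) * (R - x) = 1 + γ * x := by
        rw [hxdef]
        field_simp
        ring
      rw [hargx]
      have hcoefpos : 0 < p * (1-p)^(N+w-1) * (1/2) := by
        have := pow_pos (show (0:ℝ) < 1 - p by linarith) (N+w-1)
        apply mul_pos (mul_pos hp this); norm_num
      have hlogb : 0 < (logb 2 (1 + γ * x) - logb 2 u)
          + (w:ℝ) * (logb 2 (1 + γ * x) - logb 2 v) := by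
        have h0 : (logb 2 (1 + γ * x) - logb 2 u)
            + (w:ℝ) * (logb 2 (1 + γ * x) - logb 2 v)
            = ((1+(w:ℝ)) * Real.log (1 + γ * x)
               - (Real.log u + (w:ℝ) * Real.log v)) / Real.log 2 := by
          simp only [Real.logb]; ring
        rw [h0]
        exact div_pos (by linarith [hkey]) hlog2
      have hfin : 0 < p * (1-p)^(N+w-1) * (1/2) * ((logb 2 (1 + γ * x) - logb 2 u)
          + (w:ℝ) * (logb 2 (1 + γ * x) - logb 2 v)) := mul_pos hcoefpos hlogb
      linarith [hfin]
    have := hmax η hηadm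
    linarith
  -- convert ξ N = x into the required form
  have h6 : x * ((w:ℝ)+1) = R := by
    rw [hxdef]; field_simp
  rw [← hmain] at h6
  have h8 : R = B - S + ξ N := by rw [hRdef]; ring
  rw [eq_div_iff (ne_of_gt hw0)]
  linarith

/-- For the maximizer of `T_N`: strict inequality `ξ_j < (B - ∑_{i=1}^j ξ_i)/w`
for all `j < N`, and equality `ξ_N = (B - ∑_{i=1}^N ξ_i)/w` at `j = N`. -/
theorem TN_maximizer_residual (B γ p : ℝ) (w N : ℕ) (hB : 0 < B) (hγ : 0 < γ)
    (hw : 1 ≤ w) (hp : 0 < p) (hp1 : p < 1) (hN : 1 ≤ N) (ξ : ℕ → ℝ)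
    (hξ : ξ ∈ adm B N) (hmax : ∀ η ∈ adm B N, TN B γ p w N η ≤ TN B γ p w N ξ) :
    (∀ j, 1 ≤ j → j < N → ξ j < (B - ∑ i ∈ Finset.Icc 1 j, ξ i) / w)
    ∧ ξ N = (B - ∑ i ∈ Finset.Icc 1 N, ξ i) / w := by
  classical
  have hnn := hξ.1
  have hz := hξ.2.1
  have hsum := hξ.2.2
  have hw0 : (0:ℝ) < w := by exact_mod_cast hw
  have hγw : 0 < γ / (w:ℝ) := div_pos hγ hw0
  have heq : ξ N = (B - ∑ i ∈ Finset.Icc 1 N, ξ i) / w :=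
    last_coord B γ p w N hγ hw hp hp1 hN ξ hξ hmax
  have hmono : ∀ k m : ℕ, k ≤ m → m ≤ N →
      (∑ i ∈ Finset.Icc 1 k, ξ i) ≤ ∑ i ∈ Finset.Icc 1 m, ξ i := by
    intro k m hkm hmN
    refine Finset.sum_le_sum_of_subset_of_nonneg (Finset.Icc_subset_Icc le_rfl hkm) ?_
    intro i hi _
    exact hnn i (Finset.mem_Icc.mp hi).1 (le_trans (Finset.mem_Icc.mp hi).2 hmN)
  have hstep : ∀ k, 1 ≤ k → (∑ i ∈ Finset.Icc 1 k, ξ i)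
      = (∑ i ∈ Finset.Icc 1 (k-1), ξ i) + ξ k := by
    intro k hk
    obtain ⟨m, rfl⟩ : ∃ m, k = m + 1 := ⟨k-1, by omega⟩
    rw [Finset.sum_Icc_succ_top (by omega : 1 ≤ m+1)]
    simp
  -- Step B : the total used budget is strictly less than B
  have hSNB : (∑ i ∈ Finset.Icc 1 N, ξ i) < B := by
    rcases lt_or_eq_of_le hsum with h | h
    · exact h
    exfalso
    have hξN0 : ξ N = 0 := by rw [heq, h]; simp
    have hex : ∃ i ∈ Finset.Icc 1 N, 0 < ξ i := by
      by_contra hcon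
      push_neg at hcon
      have h0 : (∑ i ∈ Finset.Icc 1 N, ξ i) = 0 :=
        Finset.sum_eq_zero (fun i hi =>
          le_antisymm (hcon i hi) (hnn i (Finset.mem_Icc.mp hi).1 (Finset.mem_Icc.mp hi).2))
      rw [h0] at h
      linarith
    set T := (Finset.Icc 1 N).filter (fun i => 0 < ξ i) with hT
    have hTne : T.Nonempty := by
      obtain ⟨i, hi1, hi2⟩ := hex
      exact ⟨i, Finset.mem_filter.mpr ⟨hi1, hi2⟩⟩
    set j := T.max' hTne with hj
    have hjT := T.max'_mem hTne
    have hj1N : 1 ≤ j ∧ j ≤ N := Finset.mem_Icc.mp (Finset.mem_filter.mp hjT).1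
    have hξj : 0 < ξ j := (Finset.mem_filter.mp hjT).2
    have hafter : ∀ i, j < i → i ≤ N → ξ i = 0 := by
      intro i hji hiN
      by_contra hcon
      have hpos : 0 < ξ i := lt_of_le_of_ne (hnn i (by omega) hiN) (Ne.symm hcon)
      have : i ≤ j := T.le_max' i (Finset.mem_filter.mpr ⟨Finset.mem_Icc.mpr ⟨by omega, hiN⟩, hpos⟩)
      omega
    have hjN : j < N := by
      rcases lt_or_eq_of_le hj1N.2 with h' | h'
      · exact h'
      exfalso
      rw [h', hξN0] at hξj
      exact lt_irrefl 0 hξj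
    have hIcc : ∀ k : ℕ, Finset.Icc 1 k = Finset.Ioc 0 k := by
      intro k; ext i; simp [Finset.mem_Icc, Finset.mem_Ioc]; omega
    have hSj : (∑ i ∈ Finset.Icc 1 j, ξ i) = B := by
      have hsplit := Finset.sum_Ioc_consecutive (f := ξ)
        (by omega : (0:ℕ) ≤ j) (by omega : j ≤ N)
      have hzero : (∑ i ∈ Finset.Ioc j N, ξ i) = 0 :=
        Finset.sum_eq_zero (fun i hi =>
          hafter i (Finset.mem_Ioc.mp hi).1 (Finset.mem_Ioc.mp hi).2)
      rw [hzero, add_zero, ← hIcc, ← hIcc] at hsplit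
      rw [hsplit, h]
    have hkey : 1/(1 + γ * ξ j) < (1-p)/(1 + γ * ξ (j+1))
        + p/(1 + (γ/(w:ℝ)) * (B - ∑ i ∈ Finset.Icc 1 j, ξ i)) := by
      rw [hafter (j+1) (by omega) (by omega), hSj]
      simp only [mul_zero, add_zero, sub_self, div_one]
      have he1 : (1:ℝ) - p + p = 1 := by ring
      rw [he1, div_lt_one (by nlinarith : (0:ℝ) < 1 + γ * ξ j)]
      nlinarith
    obtain ⟨η, hηadm, hlt⟩ := swap_improve B γ p w N j hγ hw hp hp1 hj1N.1 hjN ξ hξ hξj hkey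
    exact absurd (hmax η hηadm) (not_le.mpr hlt)
  have hξNpos : 0 < ξ N := by
    rw [heq]
    exact div_pos (by linarith) hw0
  -- the one-step descent implication
  have hG : ∀ j, 1 ≤ j → j < N →
      (1 + γ * ξ (j+1) < 1 + (γ/(w:ℝ)) * (B - ∑ i ∈ Finset.Icc 1 j, ξ i)) →
      (1 + γ * ξ j < 1 + (γ/(w:ℝ)) * (B - ∑ i ∈ Finset.Icc 1 j, ξ i)) := by
    intro j hj1 hjN hQ
    have hSjB : (∑ i ∈ Finset.Icc 1 j, ξ i) ≤ ∑ i ∈ Finset.Icc 1 N, ξ i :=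
      hmono j N (by omega) le_rfl
    rcases (hnn j hj1 (by omega)).lt_or_eq with hpos | hzero
    · by_contra hcon
      push_neg at hcon
      have hC : 0 < 1 + (γ/(w:ℝ)) * (B - ∑ i ∈ Finset.Icc 1 j, ξ i) := by
        nlinarith
      have hBq : 0 < 1 + γ * ξ (j+1) := by
        have := hnn (j+1) (by omega) (by omega)
        nlinarith
      have hkey : 1/(1 + γ * ξ j) < (1-p)/(1 + γ * ξ (j+1))
          + p/(1 + (γ/(w:ℝ)) * (B - ∑ i ∈ Finset.Icc 1 j, ξ i)) := by
        have h1 : 1/(1 + γ * ξ j)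
            ≤ 1/(1 + (γ/(w:ℝ)) * (B - ∑ i ∈ Finset.Icc 1 j, ξ i)) :=
          one_div_le_one_div_of_le hC hcon
        have h2 : (1-p)/(1 + (γ/(w:ℝ)) * (B - ∑ i ∈ Finset.Icc 1 j, ξ i))
            < (1-p)/(1 + γ * ξ (j+1)) :=
          div_lt_div_of_pos_left (by linarith) hBq hQ
        have h3 : (1-p)/(1 + (γ/(w:ℝ)) * (B - ∑ i ∈ Finset.Icc 1 j, ξ i))
            + p/(1 + (γ/(w:ℝ)) * (B - ∑ i ∈ Finset.Icc 1 j, ξ i))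
            = 1/(1 + (γ/(w:ℝ)) * (B - ∑ i ∈ Finset.Icc 1 j, ξ i)) := by
          rw [← add_div]; norm_num
        linarith
      obtain ⟨η, hηadm, hlt⟩ := swap_improve B γ p w N j hγ hw hp hp1 hj1 hjN ξ hξ hpos hkey
      exact absurd (hmax η hηadm) (not_le.mpr hlt)
    · rw [← hzero, mul_zero, add_zero]
      have hlt : (∑ i ∈ Finset.Icc 1 j, ξ i) < B := lt_of_le_of_lt hSjB hSNB
      nlinarith
  -- base case at j = N
  have hQN : 1 + γ * ξ N < 1 + (γ/(w:ℝ)) * (B - ∑ i ∈ Finset.Icc 1 (N-1), ξ i) := by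
    have hEN : γ * ξ N = (γ/(w:ℝ)) * (B - ∑ i ∈ Finset.Icc 1 N, ξ i) := by
      rw [heq]; field_simp
    have hSN1 : (∑ i ∈ Finset.Icc 1 (N-1), ξ i) = (∑ i ∈ Finset.Icc 1 N, ξ i) - ξ N := by
      have := hstep N hN
      linarith
    have hexp : (γ/(w:ℝ)) * (B - ∑ i ∈ Finset.Icc 1 (N-1), ξ i)
        = (γ/(w:ℝ)) * (B - ∑ i ∈ Finset.Icc 1 N, ξ i) + (γ/(w:ℝ)) * ξ N := by
      rw [hSN1]; ring
    have hp2 : 0 < (γ/(w:ℝ)) * ξ N := mul_pos hγw hξNpos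
    linarith
  -- downward induction
  have main : ∀ m : ℕ, ∀ j, 1 ≤ j → j ≤ N → N - j ≤ m →
      1 + γ * ξ j < 1 + (γ/(w:ℝ)) * (B - ∑ i ∈ Finset.Icc 1 (j-1), ξ i) := by
    intro m
    induction m with
    | zero =>
      intro j h1 h2 h3
      have : j = N := by omega
      subst this
      exact hQN
    | succ m ih =>
      intro j h1 h2 h3
      by_cases hjN : j = N
      · subst hjN; exact hQN
      · have hjltN : j < N := by omega
        have hQ1 := ih (j+1) (by omega) (by omega) (by omega)
        simp only [Nat.add_sub_cancel] at hQ1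
        have hGj := hG j h1 hjltN hQ1
        have hm : (∑ i ∈ Finset.Icc 1 (j-1), ξ i) ≤ ∑ i ∈ Finset.Icc 1 j, ξ i :=
          hmono (j-1) j (by omega) (by omega)
        have : (γ/(w:ℝ)) * (B - ∑ i ∈ Finset.Icc 1 j, ξ i)
            ≤ (γ/(w:ℝ)) * (B - ∑ i ∈ Finset.Icc 1 (j-1), ξ i) :=
          mul_le_mul_of_nonneg_left (by linarith) (le_of_lt hγw)
        linarith
  refine ⟨?_, heq⟩
  intro j hj1 hjN
  have hQ1 := main (N - (j+1)) (j+1) (by omega) (by omega) (by omega)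
  simp only [Nat.add_sub_cancel] at hQ1
  have hGj := hG j hj1 hjN hQ1
  have h2 : γ * ξ j < γ * ((B - ∑ i ∈ Finset.Icc 1 j, ξ i)/(w:ℝ)) := by
    have h3 : (γ/(w:ℝ)) * (B - ∑ i ∈ Finset.Icc 1 j, ξ i)
        = γ * ((B - ∑ i ∈ Finset.Icc 1 j, ξ i)/(w:ℝ)) := by ring
    linarith
  exact lt_of_mul_lt_mul_left h2 (le_of_lt hγ)
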